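/- Let n ≥ 1, let ρ be a positive semidefinite 2ⁿ×2ⁿ complex matrix with tr(ρ) = 1, and let O be a Hermitian 2ⁿ×2ⁿ complex matrix with tr(O) = 0. Define 𝒞⁽ⁱⁱ⁾ = Σ_{x,y ∈ {0,1}ⁿ} ( |y x x⟩ + |x y x⟩ + |x x y⟩ )( ⟨y x x| + ⟨x y x| + ⟨x x y| ), a matrix indexed by triples of bit strings. Then | tr( 𝒞⁽ⁱⁱ⁾ (ρ ⊗ O ⊗ O) ) | ≤ 7 tr(O²). -/

import Mathlib

open Finset Matrix
open scoped ComplexOrder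

/-- Bit strings of length `n`. -/
abbrev Bits (n : ℕ) := Fin n → Fin 2

/-- Triples of bit strings. -/
abbrev Bits3 (n : ℕ) := Bits n × Bits n × Bits n

/-- The standard basis vector `|a b c⟩` of `ℂ^{({0,1}ⁿ)³}`. -/
def ket3 {n : ℕ} (a b c : Bits n) : Bits3 n → ℂ :=
  fun p => if p = (a, b, c) then 1 else 0

/-- The Kronecker product `P ⊗ Q ⊗ R`, a matrix indexed by triples of bit strings. -/
def kron3 {ι : Type*} (P Q R : Matrix ι ι ℂ) : Matrix (ι × ι × ι) (ι × ι × ι) ℂ :=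
  Matrix.of fun p q => P p.1 q.1 * Q p.2.1 q.2.1 * R p.2.2 q.2.2

/-- The matrix `𝒞⁽ⁱⁱ⁾ = Σ_{x,y} (|yxx⟩+|xyx⟩+|xxy⟩)(⟨yxx|+⟨xyx|+⟨xxy|)`. -/
noncomputable def Cii (n : ℕ) : Matrix (Bits3 n) (Bits3 n) ℂ :=
  ∑ x : Bits n, ∑ y : Bits n,
    Matrix.vecMulVec (ket3 y x x + ket3 x y x + ket3 x x y)
      (ket3 y x x + ket3 x y x + ket3 x x y)

lemma trace_vecMulVec_mul {ι : Type*} [Fintype ι] (u v : ι → ℂ) (M : Matrix ι ι ℂ) :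
    (Matrix.vecMulVec u v * M).trace = v ⬝ᵥ M.mulVec u := by
  simp only [Matrix.trace, Matrix.diag, Matrix.mul_apply, Matrix.vecMulVec_apply,
    dotProduct, Matrix.mulVec]
  rw [Finset.sum_comm]
  congr 1; ext q
  simp [Finset.mul_sum, Finset.sum_mul]
  congr 1; ext p
  ring

lemma ket_dot {n : ℕ} (P Q R : Matrix (Bits n) (Bits n) ℂ) (a b c d e f : Bits n) :
    ket3 a b c ⬝ᵥ (kron3 P Q R).mulVec (ket3 d e f) = P a d * Q b e * R c f := by
  simp [ket3, dotProduct, Matrix.mulVec, kron3, Fintype.sum_prod_type, Prod.ext_iff,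
    Finset.sum_ite_eq, ite_and]

lemma trace_formula {n : ℕ} (ρ O : Matrix (Bits n) (Bits n) ℂ) :
    (Cii n * kron3 ρ O O).trace =
      ∑ x : Bits n, ∑ y : Bits n,
        (ρ y y * O x x * O x x + ρ y x * O x y * O x x + ρ y x * O x x * O x y
          + ρ x y * O y x * O x x + ρ x x * O y y * O x x + ρ x x * O y x * O x y
          + ρ x y * O x x * O y x + ρ x x * O x y * O y x + ρ x x * O x x * O y y) := by
  rw [Cii]
  simp only [Finset.sum_mul, Matrix.trace_sum]
  refine Finset.sum_congr rfl fun x _ => Finset.sum_congr rfl fun y _ => ?_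
  rw [trace_vecMulVec_mul]
  simp only [Matrix.mulVec_add, dotProduct_add, add_dotProduct, ket_dot]
  ring

lemma psd_diag_real {ι : Type*} [Fintype ι] [DecidableEq ι] {ρ : Matrix ι ι ℂ}
    (hρ : ρ.PosSemidef) (x : ι) : ρ x x = ((ρ x x).re : ℂ) := by
  have h := congrFun (congrFun hρ.isHermitian x) x
  simp [Matrix.conjTranspose_apply] at h
  exact ((Complex.conj_eq_iff_re).mp h).symm

lemma psd_diag_nonneg {ι : Type*} [Fintype ι] [DecidableEq ι] {ρ : Matrix ι ι ℂ}
    (hρ : ρ.PosSemidef) (x : ι) : 0 ≤ (ρ x x).re := by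
  have h := hρ.re_dotProduct_nonneg (Pi.single x 1)
  simpa [Matrix.dotProduct_mulVec, dotProduct, Pi.single_apply, Matrix.mulVec] using h

lemma psd_entry_sq_le {ι : Type*} [Fintype ι] [DecidableEq ι] {ρ : Matrix ι ι ℂ}
    (hρ : ρ.PosSemidef) (x y : ι) :
    ‖ρ x y‖ ^ 2 ≤ (ρ x x).re * (ρ y y).re := by
  by_cases hxy : x = y
  · subst hxy
    have h1 := psd_diag_real hρ x
    have h2 := psd_diag_nonneg hρ x
    rw [h1]
    simp [Complex.norm_real, Real.norm_eq_abs, abs_of_nonneg h2, sq]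
  · set m : ℝ := ‖ρ x y‖ ^ 2 with hm
    have hmz : ((m : ℝ) : ℂ) = (starRingEnd ℂ) (ρ x y) * (ρ x y) := by
      rw [hm, Complex.sq_norm]
      exact Complex.normSq_eq_conj_mul_self
    have hherm : ρ y x = (starRingEnd ℂ) (ρ x y) := by
      have h := congrFun (congrFun hρ.isHermitian y) x
      simpa [Matrix.conjTranspose_apply] using h.symm
    have key : ∀ t : ℝ, 0 ≤ (m * (ρ x x).re) * (t * t) + (-(2 * m)) * t + (ρ y y).re := by
      intro t
      set a : ℂ := (-t : ℂ) * ρ x y with ha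
      set v : ι → ℂ := Pi.single x a + Pi.single y 1 with hv
      have hQ : star v ⬝ᵥ ρ.mulVec v
          = (star a) * a * ρ x x + (star a) * ρ x y + ρ y x * a + ρ y y := by
        simp only [hv, star_add, ← Pi.single_star, star_one]
        simp only [Matrix.mulVec_add, Matrix.mulVec_single, dotProduct_add,
          add_dotProduct, single_dotProduct]
        simp [Ne.symm hxy, hxy, Pi.single_apply, mul_comm, mul_assoc, mul_left_comm]
        ring
      have hC : (star a) * a * ρ x x + (star a) * ρ x y + ρ y x * a + ρ y y
          = ((m * (t*t) : ℝ) : ℂ) * ρ x x + ((-(2*m)*t : ℝ) : ℂ) + ρ y y := by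
        rw [ha, hherm]
        rw [show star ((-t:ℂ) * ρ x y) = (-t:ℂ) * (starRingEnd ℂ) (ρ x y) by
          simp [RingHom.map_mul]]
        push_cast
        linear_combination ((t:ℂ)^2 * ρ x x - 2*(t:ℂ)) * hmz.symm
      have hre := hρ.re_dotProduct_nonneg v
      rw [hQ, hC] at hre
      simp only [RCLike.re_to_complex, Complex.add_re, Complex.re_ofReal_mul,
        Complex.ofReal_re] at hre
      convert hre using 1
      ring
    have hd := discrim_le_zero key
    rw [discrim] at hd
    nlinarith [sq_nonneg (‖ρ x y‖), psd_diag_nonneg hρ x, psd_diag_nonneg hρ y,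
      mul_nonneg (psd_diag_nonneg hρ x) (psd_diag_nonneg hρ y)]

/-- `|tr(𝒞⁽ⁱⁱ⁾ (ρ ⊗ O ⊗ O))| ≤ 7 tr(O²)`. -/
theorem Cii_bound (n : ℕ) (hn : 1 ≤ n)
    (ρ O : Matrix (Bits n) (Bits n) ℂ)
    (hρ : ρ.PosSemidef) (hρtr : ρ.trace = 1)
    (hO : O.IsHermitian) (hOtr : O.trace = 0) :
    ‖(Cii n * kron3 ρ O O).trace‖ ≤ 7 * ((O * O).trace).re := by
  -- Notation
  set r : Bits n → ℝ := fun x => (ρ x x).re with hr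
  set c : Bits n → ℝ := fun x => ∑ y, ‖O x y‖ ^ 2 with hc
  set T : ℝ := ∑ x, c x with hT
  have hOconj : ∀ x y : Bits n, O y x = (starRingEnd ℂ) (O x y) := by
    intro x y
    have h := congrFun (congrFun hO y) x
    simpa [Matrix.conjTranspose_apply] using h.symm
  have hcnonneg : ∀ x, 0 ≤ c x := fun x => Finset.sum_nonneg fun y _ => sq_nonneg _
  have hTnonneg : 0 ≤ T := Finset.sum_nonneg fun x _ => hcnonneg x
  have hcT : ∀ x, c x ≤ T :=
    fun x => Finset.single_le_sum (fun y (_ : y ∈ Finset.univ) => hcnonneg y) (Finset.mem_univ x)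
  have hrnonneg : ∀ x, 0 ≤ r x := fun x => psd_diag_nonneg hρ x
  have hrsum : ∑ x, r x = 1 := by
    have := congrArg Complex.re hρtr
    simpa [Matrix.trace, Matrix.diag, Complex.re_sum] using this
  have hOO : ∀ x y : Bits n, O x y * O y x = ((‖O x y‖ ^ 2 : ℝ) : ℂ) := by
    intro x y
    rw [hOconj x y, Complex.mul_conj]
    norm_cast
    exact (Complex.sq_norm _).symm
  have habs2c : ∀ x, ‖O x x‖ ^ 2 ≤ c x := by
    intro x
    simp only [hc]
    exact Finset.single_le_sum (f := fun y => ‖O x y‖ ^ 2)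
      (fun y _ => sq_nonneg _) (Finset.mem_univ x)
  -- tr(O²) = T
  have htrO2 : ((O * O).trace).re = T := by
    have h : (O * O).trace = ((T : ℝ) : ℂ) := by
      simp only [hT, hc, Complex.ofReal_sum]
      simp only [Matrix.trace, Matrix.diag, Matrix.mul_apply]
      exact Finset.sum_congr rfl fun x _ => Finset.sum_congr rfl fun y _ => hOO x y
    rw [h, Complex.ofReal_re]
  -- entry bound
  have hentry : ∀ x y : Bits n, ‖ρ y x‖ ≤ Real.sqrt (r y) * Real.sqrt (r x) := by
    intro x y
    have h := psd_entry_sq_le hρ y x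
    have : ‖ρ y x‖ = Real.sqrt (‖ρ y x‖ ^ 2) := by
      rw [Real.sqrt_sq (norm_nonneg _)]
    rw [this, ← Real.sqrt_mul (hrnonneg y)]
    exact Real.sqrt_le_sqrt h
  -- inner Cauchy–Schwarz: |∑_y ρ_{yx} O_{xy}| ≤ √(r x) √(c x)
  have hinner : ∀ x : Bits n,
      ‖∑ y, ρ y x * O x y‖ ≤ Real.sqrt (r x) * Real.sqrt (c x) := by
    intro x
    calc ‖∑ y, ρ y x * O x y‖
        ≤ ∑ y, ‖ρ y x * O x y‖ := norm_sum_le _ _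
      _ = ∑ y, ‖ρ y x‖ * ‖O x y‖ :=
          Finset.sum_congr rfl fun y _ => norm_mul _ _
      _ ≤ ∑ y, (Real.sqrt (r y) * Real.sqrt (r x)) * ‖O x y‖ := by
          refine Finset.sum_le_sum fun y _ => ?_
          exact mul_le_mul_of_nonneg_right (hentry x y) (norm_nonneg _)
      _ = Real.sqrt (r x) * ∑ y, Real.sqrt (r y) * ‖O x y‖ := by
          rw [Finset.mul_sum]; refine Finset.sum_congr rfl fun y _ => by ring
      _ ≤ Real.sqrt (r x) * (Real.sqrt (∑ y, Real.sqrt (r y) ^ 2)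
            * Real.sqrt (∑ y, ‖O x y‖ ^ 2)) := by
          refine mul_le_mul_of_nonneg_left ?_ (Real.sqrt_nonneg _)
          exact Real.sum_mul_le_sqrt_mul_sqrt _ _ _
      _ = Real.sqrt (r x) * Real.sqrt (c x) := by
          have : ∑ y, Real.sqrt (r y) ^ 2 = 1 := by
            rw [← hrsum]
            exact Finset.sum_congr rfl fun y _ => Real.sq_sqrt (hrnonneg y)
          rw [this, Real.sqrt_one, one_mul, hc]
  -- outer Cauchy–Schwarz
  have hout : ∑ x, ‖O x x‖ * (Real.sqrt (r x) * Real.sqrt (c x)) ≤ T := by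
    calc ∑ x, ‖O x x‖ * (Real.sqrt (r x) * Real.sqrt (c x))
        ≤ Real.sqrt (∑ x, ‖O x x‖ ^ 2)
            * Real.sqrt (∑ x, (Real.sqrt (r x) * Real.sqrt (c x)) ^ 2) :=
          Real.sum_mul_le_sqrt_mul_sqrt _ _ _
      _ ≤ Real.sqrt T * Real.sqrt T := by
          refine mul_le_mul (Real.sqrt_le_sqrt ?_) (Real.sqrt_le_sqrt ?_)
            (Real.sqrt_nonneg _) (Real.sqrt_nonneg _)
          · exact Finset.sum_le_sum fun x _ => habs2c x
          · calc ∑ x, (Real.sqrt (r x) * Real.sqrt (c x)) ^ 2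
                = ∑ x, r x * c x := by
                  refine Finset.sum_congr rfl fun x _ => ?_
                  rw [mul_pow, Real.sq_sqrt (hrnonneg x), Real.sq_sqrt (hcnonneg x)]
              _ ≤ ∑ x, r x * T := Finset.sum_le_sum fun x _ =>
                  mul_le_mul_of_nonneg_left (hcT x) (hrnonneg x)
              _ = T := by rw [← Finset.sum_mul, hrsum, one_mul]
      _ = T := Real.mul_self_sqrt hTnonneg
  -- the nine grouped sums
  have hsumrc : ∑ x, r x * c x ≤ T := by
    calc ∑ x, r x * c x ≤ ∑ x, r x * T := Finset.sum_le_sum fun x _ =>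
          mul_le_mul_of_nonneg_left (hcT x) (hrnonneg x)
      _ = T := by rw [← Finset.sum_mul, hrsum, one_mul]
  have hG1 : ‖∑ x : Bits n, ∑ y : Bits n, ρ y y * O x x * O x x‖ ≤ T := by
    have heq : ∑ x : Bits n, ∑ y : Bits n, ρ y y * O x x * O x x
        = ∑ x : Bits n, O x x * O x x := by
      refine Finset.sum_congr rfl fun x _ => ?_
      rw [← Finset.sum_mul, ← Finset.sum_mul]
      have : ∑ y : Bits n, ρ y y = 1 := hρtr
      rw [this, one_mul]
    rw [heq]
    calc ‖∑ x : Bits n, O x x * O x x‖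
        ≤ ∑ x, ‖O x x * O x x‖ := norm_sum_le _ _
      _ = ∑ x, ‖O x x‖ ^ 2 := by
          refine Finset.sum_congr rfl fun x _ => ?_
          rw [norm_mul, sq]
      _ ≤ ∑ x, c x := Finset.sum_le_sum fun x _ => habs2c x
      _ = T := hT.symm
  have htrO : ∑ y : Bits n, O y y = 0 := hOtr
  have hρconj : ∀ x y : Bits n, ρ y x = (starRingEnd ℂ) (ρ x y) := by
    intro x y
    have h := congrFun (congrFun hρ.isHermitian y) x
    simpa [Matrix.conjTranspose_apply] using h.symm
  have hG5 : (∑ x : Bits n, ∑ y : Bits n, ρ x x * O y y * O x x) = 0 := by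
    refine Finset.sum_eq_zero fun x _ => ?_
    have h : ∑ y : Bits n, ρ x x * O y y * O x x = ρ x x * O x x * ∑ y : Bits n, O y y := by
      rw [Finset.mul_sum]
      exact Finset.sum_congr rfl fun y _ => by ring
    rw [h, htrO, mul_zero]
  have hG9 : (∑ x : Bits n, ∑ y : Bits n, ρ x x * O x x * O y y) = 0 := by
    refine Finset.sum_eq_zero fun x _ => ?_
    have h : ∑ y : Bits n, ρ x x * O x x * O y y = ρ x x * O x x * ∑ y : Bits n, O y y := by
      rw [Finset.mul_sum]
    rw [h, htrO, mul_zero]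
  -- diagonal-type groups
  have hG6 : ‖∑ x : Bits n, ∑ y : Bits n, ρ x x * O y x * O x y‖ ≤ T := by
    have heq : ∑ x : Bits n, ∑ y : Bits n, ρ x x * O y x * O x y
        = ((∑ x, r x * c x : ℝ) : ℂ) := by
      rw [Complex.ofReal_sum]
      refine Finset.sum_congr rfl fun x _ => ?_
      have h1 : ∑ y : Bits n, ρ x x * O y x * O x y = ρ x x * ∑ y : Bits n, O y x * O x y := by
        rw [Finset.mul_sum]
        exact Finset.sum_congr rfl fun y _ => by ring
      have h2 : ∑ y : Bits n, O y x * O x y = ((c x : ℝ) : ℂ) := by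
        simp only [hc, Complex.ofReal_sum]
        refine Finset.sum_congr rfl fun y _ => ?_
        rw [mul_comm]
        exact hOO x y
      rw [h1, h2, psd_diag_real hρ x]
      push_cast
      rfl
    rw [heq, Complex.norm_real, Real.norm_eq_abs, abs_of_nonneg (Finset.sum_nonneg fun x _ =>
      mul_nonneg (hrnonneg x) (hcnonneg x))]
    exact hsumrc
  have hG8 : ‖∑ x : Bits n, ∑ y : Bits n, ρ x x * O x y * O y x‖ ≤ T := by
    have heq : ∑ x : Bits n, ∑ y : Bits n, ρ x x * O x y * O y x
        = ∑ x : Bits n, ∑ y : Bits n, ρ x x * O y x * O x y :=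
      Finset.sum_congr rfl fun x _ => Finset.sum_congr rfl fun y _ => by ring
    rw [heq]; exact hG6
  -- off-diagonal-type groups
  have houter : ∀ f : Bits n → ℂ,
      (∀ x, ‖f x‖ ≤ Real.sqrt (r x) * Real.sqrt (c x)) →
      ‖∑ x, f x * O x x‖ ≤ T := by
    intro f hf
    calc ‖∑ x, f x * O x x‖
        ≤ ∑ x, ‖f x * O x x‖ := norm_sum_le _ _
      _ = ∑ x, ‖O x x‖ * ‖f x‖ := by
          refine Finset.sum_congr rfl fun x _ => ?_
          rw [norm_mul, mul_comm]
      _ ≤ ∑ x, ‖O x x‖ * (Real.sqrt (r x) * Real.sqrt (c x)) :=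
          Finset.sum_le_sum fun x _ =>
            mul_le_mul_of_nonneg_left (hf x) (norm_nonneg _)
      _ ≤ T := hout
  have hG2 : ‖∑ x : Bits n, ∑ y : Bits n, ρ y x * O x y * O x x‖ ≤ T := by
    have heq : ∑ x : Bits n, ∑ y : Bits n, ρ y x * O x y * O x x
        = ∑ x : Bits n, (∑ y : Bits n, ρ y x * O x y) * O x x := by
      refine Finset.sum_congr rfl fun x _ => ?_
      rw [Finset.sum_mul]
    rw [heq]
    exact houter _ hinner
  have hG3 : ‖∑ x : Bits n, ∑ y : Bits n, ρ y x * O x x * O x y‖ ≤ T := by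
    have heq : ∑ x : Bits n, ∑ y : Bits n, ρ y x * O x x * O x y
        = ∑ x : Bits n, ∑ y : Bits n, ρ y x * O x y * O x x :=
      Finset.sum_congr rfl fun x _ => Finset.sum_congr rfl fun y _ => by ring
    rw [heq]; exact hG2
  have hinner2 : ∀ x : Bits n,
      ‖∑ y, ρ x y * O y x‖ ≤ Real.sqrt (r x) * Real.sqrt (c x) := by
    intro x
    have heq : ∑ y, ρ x y * O y x = (starRingEnd ℂ) (∑ y, ρ y x * O x y) := by
      rw [map_sum]
      refine Finset.sum_congr rfl fun y _ => ?_
      rw [map_mul (starRingEnd ℂ), ← hρconj y x, ← hOconj x y]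
    rw [heq, Complex.norm_conj]
    exact hinner x
  have hG4 : ‖∑ x : Bits n, ∑ y : Bits n, ρ x y * O y x * O x x‖ ≤ T := by
    have heq : ∑ x : Bits n, ∑ y : Bits n, ρ x y * O y x * O x x
        = ∑ x : Bits n, (∑ y : Bits n, ρ x y * O y x) * O x x := by
      refine Finset.sum_congr rfl fun x _ => ?_
      rw [Finset.sum_mul]
    rw [heq]
    exact houter _ hinner2
  have hG7 : ‖∑ x : Bits n, ∑ y : Bits n, ρ x y * O x x * O y x‖ ≤ T := by
    have heq : ∑ x : Bits n, ∑ y : Bits n, ρ x y * O x x * O y x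
        = ∑ x : Bits n, ∑ y : Bits n, ρ x y * O y x * O x x :=
      Finset.sum_congr rfl fun x _ => Finset.sum_congr rfl fun y _ => by ring
    rw [heq]; exact hG4
  -- combine
  have tri : ∀ (a b : ℂ) (A B : ℝ), ‖a‖ ≤ A → ‖b‖ ≤ B →
      ‖a + b‖ ≤ A + B := fun a b A B ha hb =>
    le_trans (norm_add_le a b) (add_le_add ha hb)
  rw [trace_formula, htrO2]
  simp only [Finset.sum_add_distrib]
  rw [hG5, hG9, add_zero, add_zero]
  have hfinal := tri _ _ _ _ (tri _ _ _ _ (tri _ _ _ _ (tri _ _ _ _ (tri _ _ _ _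
    (tri _ _ _ _ hG1 hG2) hG3) hG4) hG6) hG7) hG8
  linarith
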